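/- Let T = T(γ₁, γ₂, γ₃) be a Type 3 triangle (with γ₁, γ₂, γ₃ > 0 and γ₂, γ₃ < 1) for S = b + ℤ². Then there exists a polyhedron P ⊆ ℝ³ such that: (i) P is a translated cone with three facets whose apex a = (a₁, a₂, a₃) satisfies a₃ > 0; (ii) P ∩ {x ∈ ℝ³ : x₃ = 0} = T × {0}; (iii) P is a maximal (S × ℤ₊)-free convex set; and (iv) each facet of P contains in its relative interior a point (sᵢ, zᵢ) ∈ S × ℤ₊ with zᵢ ≥ 1 (i = 1, 2, 3). -/

import Mathlib

open scoped BigOperators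

noncomputable section

/-- Dot product on `ℝ²`. -/
def dot2 (u v : ℝ × ℝ) : ℝ := u.1 * v.1 + u.2 * v.2

/-- Dot product on `ℝ³`. -/
def dot3 (u v : ℝ × ℝ × ℝ) : ℝ := u.1 * v.1 + u.2.1 * v.2.1 + u.2.2 * v.2.2

/-- `S × ℤ₊ ⊆ ℝ³`. -/
def SZ3 (S : Set (ℝ × ℝ)) : Set (ℝ × ℝ × ℝ) :=
  {x | ((x.1, x.2.1) : ℝ × ℝ) ∈ S ∧ ∃ k : ℕ, x.2.2 = (k : ℝ)}

/-- `B` is a maximal `T`-free convex `0`-neighborhood. -/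
def IsMaxFreeNbhd {F : Type*} [AddCommGroup F] [Module ℝ F] [TopologicalSpace F]
    (T B : Set F) : Prop :=
  Convex ℝ B ∧ (0 : F) ∈ interior B ∧ interior B ∩ T = ∅ ∧
    ∀ B' : Set F, Convex ℝ B' → (0 : F) ∈ interior B' → interior B' ∩ T = ∅ → B ⊆ B' → B' = B

/-- Proposition 5.2: for every Type 3 triangle `T` there is a polyhedron `P ⊆ ℝ³` which is
a translated simplicial cone with apex above the plane `x₃ = 0`, has `T × {0}` as its slice
at height `0`, is maximal `(S × ℤ₊)`-free, and each of whose three facets contains an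
`S × ℤ₊` point with last coordinate at least `1` in its relative interior. -/
lemma dot3_cont (u : ℝ × ℝ × ℝ) : Continuous (fun x : ℝ × ℝ × ℝ => dot3 u x) := by
  unfold dot3
  fun_prop

lemma dot3_add_smul (u x v : ℝ × ℝ × ℝ) (δ : ℝ) :
    dot3 u (x + δ • v) = dot3 u x + δ * dot3 u v := by
  simp only [dot3, Prod.fst_add, Prod.snd_add, Prod.smul_fst, Prod.smul_snd, smul_eq_mul]
  ring

lemma dot3_combo (u x y : ℝ × ℝ × ℝ) (a b : ℝ) :
    dot3 u (a • x + b • y) = a * dot3 u x + b * dot3 u y := by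
  simp only [dot3, Prod.fst_add, Prod.snd_add, Prod.smul_fst, Prod.smul_snd, smul_eq_mul]
  ring

lemma convex_dot3_le (u : ℝ × ℝ × ℝ) : Convex ℝ {x : ℝ × ℝ × ℝ | dot3 u x ≤ 1} := by
  intro x hx y hy a b ha hb hab
  simp only [Set.mem_setOf_eq] at *
  rw [dot3_combo]
  nlinarith

lemma interior_lt (u : ℝ × ℝ × ℝ) (huu : 0 < dot3 u u) {P : Set (ℝ × ℝ × ℝ)}
    (hP : ∀ y ∈ P, dot3 u y ≤ 1) {x : ℝ × ℝ × ℝ} (hx : x ∈ interior P) : dot3 u x < 1 := by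
  obtain ⟨O, hOsub, hOopen, hxO⟩ := mem_interior.1 hx
  have hc : Continuous (fun δ : ℝ => x + δ • u) := by fun_prop
  have ht : Filter.Tendsto (fun δ : ℝ => x + δ • u) (nhds 0) (nhds x) := by
    have := hc.tendsto 0
    simpa using this
  have hev : ∀ᶠ δ in nhds (0 : ℝ), x + δ • u ∈ O := ht.eventually (hOopen.eventually_mem hxO)
  have hev' : ∀ᶠ δ in nhdsWithin (0 : ℝ) (Set.Ioi 0), x + δ • u ∈ O :=
    hev.filter_mono nhdsWithin_le_nhds
  have hpos : ∀ᶠ δ in nhdsWithin (0 : ℝ) (Set.Ioi 0), (0 : ℝ) < δ := self_mem_nhdsWithin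
  obtain ⟨δ, hδO, hδpos⟩ := (hev'.and hpos).exists
  have h1 : dot3 u (x + δ • u) ≤ 1 := hP _ (hOsub hδO)
  rw [dot3_add_smul] at h1
  nlinarith

lemma li3 {v1 v2 v3 : ℝ × ℝ × ℝ}
    (h : v1.1 * (v2.2.1 * v3.2.2 - v2.2.2 * v3.2.1)
        - v1.2.1 * (v2.1 * v3.2.2 - v2.2.2 * v3.1)
        + v1.2.2 * (v2.1 * v3.2.1 - v2.2.1 * v3.1) ≠ 0) :
    LinearIndependent ℝ ![v1, v2, v3] := by
  set Δ := v1.1 * (v2.2.1 * v3.2.2 - v2.2.2 * v3.2.1)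
        - v1.2.1 * (v2.1 * v3.2.2 - v2.2.2 * v3.1)
        + v1.2.2 * (v2.1 * v3.2.1 - v2.2.1 * v3.1) with hΔ
  rw [Fintype.linearIndependent_iff]
  intro c hc
  rw [Fin.sum_univ_three] at hc
  simp only [Matrix.cons_val_zero, Matrix.cons_val_one, Matrix.head_cons,
    Matrix.cons_val_two, Matrix.tail_cons] at hc
  have E1 := congrArg Prod.fst hc
  have E2 := congrArg (fun p : ℝ × ℝ × ℝ => p.2.1) hc
  have E3 := congrArg (fun p : ℝ × ℝ × ℝ => p.2.2) hc
  simp only [Prod.fst_add, Prod.snd_add, Prod.smul_fst, Prod.smul_snd, smul_eq_mul,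
    Prod.fst_zero, Prod.snd_zero] at E1 E2 E3
  intro i
  fin_cases i
  · have h0 : c 0 * Δ = 0 := by
      rw [hΔ]; linear_combination (v2.2.1 * v3.2.2 - v2.2.2 * v3.2.1) * E1
        - (v2.1 * v3.2.2 - v2.2.2 * v3.1) * E2 + (v2.1 * v3.2.1 - v2.2.1 * v3.1) * E3
    exact (mul_eq_zero.mp h0).resolve_right h
  · have h0 : c 1 * Δ = 0 := by
      rw [hΔ]; linear_combination (-(v1.2.1 * v3.2.2 - v1.2.2 * v3.2.1)) * E1
        + (v1.1 * v3.2.2 - v1.2.2 * v3.1) * E2 - (v1.1 * v3.2.1 - v1.2.1 * v3.1) * E3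
    exact (mul_eq_zero.mp h0).resolve_right h
  · have h0 : c 2 * Δ = 0 := by
      rw [hΔ]; linear_combination (v1.2.1 * v2.2.2 - v1.2.2 * v2.2.1) * E1
        - (v1.1 * v2.2.2 - v1.2.2 * v2.1) * E2 + (v1.1 * v2.2.1 - v1.2.1 * v2.1) * E3
    exact (mul_eq_zero.mp h0).resolve_right h


lemma dot3_sub (u x y : ℝ × ℝ × ℝ) : dot3 u (x - y) = dot3 u x - dot3 u y := by
  simp only [dot3, Prod.fst_sub, Prod.snd_sub]; ring

lemma free_core (g1 g2 g3 : ℝ) (m : ℕ) (z w : ℤ) (k : ℕ)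
    (hg1 : 0 < g1) (hg2 : 0 < g2) (hg2' : g2 < 1) (hg3 : 0 < g3) (hg3' : g3 < 1)
    (hm : 1 ≤ m) (hMg : g3 * ((m : ℝ) + 1) ≤ (m : ℝ))
    (H1 : ((m : ℝ) + 1) * ((z : ℝ) + g1 * (w : ℝ)) + (k : ℝ) * (((m : ℝ) + 1) + (m : ℝ) * g1)
        < ((m : ℝ) + 1) * (1 + g1))
    (H2 : -(z : ℝ) + g2 * (w : ℝ) < g2 + (k : ℝ) * (1 - g2))
    (H3 : g3 * (z : ℝ) < (w : ℝ)) : False := by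
  have hM1 : (1 : ℝ) ≤ (m : ℝ) := by exact_mod_cast hm
  have hk0 : (0 : ℝ) ≤ (k : ℝ) := by positivity
  rcases le_or_gt ((k : ℤ) + z) 0 with hA | hB
  · have hzkR : (z : ℝ) + (k : ℝ) ≤ 0 := by
      have h0 : (((k : ℤ) + z : ℤ) : ℝ) ≤ 0 := by exact_mod_cast hA
      push_cast at h0; linarith
    have h2' : g2 * ((w : ℝ) - 1 + k) < (z : ℝ) + k := by nlinarith
    have hwk : (w : ℝ) - 1 + k < 0 := by nlinarith
    have hzw : (w : ℝ) ≤ (z : ℝ) := by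
      have h3' : (w : ℝ) - 1 + k < (z : ℝ) + k := by nlinarith
      have h4 : (w : ℝ) - 1 < (z : ℝ) := by linarith
      have hZW : (w : ℤ) - 1 < z := by exact_mod_cast h4
      have h5 : (w : ℤ) ≤ z := by omega
      exact_mod_cast h5
    have hz0 : (z : ℝ) ≤ 0 := by linarith
    nlinarith
  · have hzkR : (1 : ℝ) ≤ (z : ℝ) + (k : ℝ) := by
      have h : (1 : ℤ) ≤ (k : ℤ) + z := hB
      have h' : (1 : ℝ) ≤ ((k : ℤ) + z : ℤ) := by exact_mod_cast h
      push_cast at h'; linarith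
    have hH1' : ((m : ℝ) + 1) * ((z : ℝ) + k - 1)
        + g1 * (((m : ℝ) + 1) * ((w : ℝ) - 1) + (k : ℝ) * (m : ℝ)) < 0 := by nlinarith [H1]
    have hA2 : ((m : ℝ) + 1) * ((w : ℝ) - 1) + (k : ℝ) * (m : ℝ) < 0 := by nlinarith
    have hw0 : (w : ℤ) ≤ 0 := by
      have hkM : (0 : ℝ) ≤ (k : ℝ) * (m : ℝ) := by positivity
      have h5 : (w : ℝ) < 1 := by nlinarith
      have h6 : (w : ℤ) < 1 := by exact_mod_cast h5
      omega
    have hw0R : (w : ℝ) ≤ 0 := by exact_mod_cast hw0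
    have hz1 : (z : ℤ) ≤ -1 := by
      by_contra hcon
      push_neg at hcon
      have hz0' : (0 : ℤ) ≤ z := by omega
      have hz0R : (0 : ℝ) ≤ (z : ℝ) := by exact_mod_cast hz0'
      nlinarith
    have hz1R : (z : ℝ) ≤ -1 := by exact_mod_cast hz1
    have hintR : ((m : ℝ) + 1) * (-(w : ℝ)) < (m : ℝ) * (-(z : ℝ)) := by nlinarith
    have hint : ((m : ℤ) + 1) * (-w) < (m : ℤ) * (-z) := by exact_mod_cast hintR
    have hint2 : ((m : ℤ) + 1) * (-w + 1) ≤ (m : ℤ) * (-z + 1) := by nlinarith [hint]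
    have hint2R : ((m : ℝ) + 1) * (-(w : ℝ) + 1) ≤ (m : ℝ) * (-(z : ℝ) + 1) := by
      exact_mod_cast hint2
    have hkR : (-(z : ℝ) + 1) ≤ (k : ℝ) := by
      have h6 : (-z + 1 : ℤ) ≤ (k : ℤ) := by omega
      exact_mod_cast h6
    have h7 : (m : ℝ) * (-(z : ℝ) + 1) ≤ (m : ℝ) * (k : ℝ) :=
      mul_le_mul_of_nonneg_left hkR (by positivity)
    have e2a : ((m : ℝ) + 1) * ((w : ℝ) - 1) = -(((m : ℝ) + 1) * (-(w : ℝ) + 1)) := by ring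
    have e2b : (m : ℝ) * (k : ℝ) = (k : ℝ) * (m : ℝ) := by ring
    linarith [hint2R, h7, e2a, e2b, hA2]

lemma facet_intrinsic (u v w Q : ℝ × ℝ × ℝ) (P : Set (ℝ × ℝ × ℝ))
    (hPmem : ∀ x, x ∈ P ↔ dot3 u x ≤ 1 ∧ dot3 v x ≤ 1 ∧ dot3 w x ≤ 1)
    (hQu : dot3 u Q = 1) (hQv : dot3 v Q < 1) (hQw : dot3 w Q < 1) :
    Q ∈ intrinsicInterior ℝ (P ∩ {x | dot3 u x = 1}) := by
  set F := P ∩ {x | dot3 u x = 1} with hF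
  have hQF : Q ∈ F := ⟨(hPmem Q).2 ⟨le_of_eq hQu, hQv.le, hQw.le⟩, hQu⟩
  set L : (ℝ × ℝ × ℝ) →ₗ[ℝ] ℝ :=
    { toFun := fun x => dot3 u x
      map_add' := by
        intro a c; simp only [dot3, Prod.fst_add, Prod.snd_add]; ring
      map_smul' := by
        intro c a
        simp only [dot3, Prod.smul_fst, Prod.smul_snd, smul_eq_mul, RingHom.id_apply]; ring } with hL
  set W : AffineSubspace ℝ (ℝ × ℝ × ℝ) :=
    AffineSubspace.comap L.toAffineMap (AffineSubspace.mk' (1 : ℝ) ⊥) with hW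
  have hFW : F ⊆ (W : Set (ℝ × ℝ × ℝ)) := by
    rintro x ⟨-, hx⟩
    show L.toAffineMap x ∈ AffineSubspace.mk' (1 : ℝ) (⊥ : Submodule ℝ ℝ)
    rw [AffineSubspace.mem_mk']
    simp only [Submodule.mem_bot, vsub_eq_sub, sub_eq_zero]
    exact hx
  have hspan : ∀ x : ℝ × ℝ × ℝ, x ∈ affineSpan ℝ F → dot3 u x = 1 := by
    intro x hx
    have hle : affineSpan ℝ F ≤ W := affineSpan_le.2 hFW
    have hxW := hle hx
    have hxW' : L.toAffineMap x ∈ AffineSubspace.mk' (1 : ℝ) (⊥ : Submodule ℝ ℝ) := hxW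
    rw [AffineSubspace.mem_mk'] at hxW'
    exact (by simpa [sub_eq_zero] using hxW' : L x = 1)
  rw [mem_intrinsicInterior]
  refine ⟨⟨Q, subset_affineSpan ℝ F hQF⟩, ?_, rfl⟩
  have hopen : IsOpen ((Subtype.val : affineSpan ℝ F → ℝ × ℝ × ℝ) ⁻¹'
      {x | dot3 v x < 1 ∧ dot3 w x < 1}) := by
    apply IsOpen.preimage continuous_subtype_val
    have h1 : Continuous fun x : ℝ × ℝ × ℝ => dot3 v x := by unfold dot3; fun_prop
    have h2 : Continuous fun x : ℝ × ℝ × ℝ => dot3 w x := by unfold dot3; fun_prop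
    exact (isOpen_lt h1 continuous_const).inter (isOpen_lt h2 continuous_const)
  apply interior_maximal _ hopen ⟨hQv, hQw⟩
  rintro ⟨x, hxspan⟩ ⟨h1, h2⟩
  have hx1 : dot3 u x = 1 := hspan x hxspan
  exact ⟨(hPmem x).2 ⟨le_of_eq hx1, h1.le, h2.le⟩, hx1⟩

lemma violate_free (S : Set (ℝ × ℝ)) (u v w Q y : ℝ × ℝ × ℝ) (B' : Set (ℝ × ℝ × ℝ))
    (hconv : Convex ℝ B') (hfree : interior B' ∩ SZ3 S = ∅)
    (hU : ∀ x : ℝ × ℝ × ℝ, dot3 u x < 1 → dot3 v x < 1 → dot3 w x < 1 → x ∈ interior B')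
    (hyB : y ∈ B') (hy : 1 < dot3 u y)
    (hQu : dot3 u Q = 1) (hQv : dot3 v Q < 1) (hQw : dot3 w Q < 1)
    (hQS : Q ∈ SZ3 S) : False := by
  have key : ∀ p : ℝ × ℝ × ℝ, dot3 p Q < 1 →
      ∀ᶠ ε in nhdsWithin (0 : ℝ) (Set.Ioi 0), dot3 p (Q + ε • (Q - y)) < 1 := by
    intro p hp
    have hc : Continuous fun ε : ℝ => dot3 p Q + ε * dot3 p (Q - y) := by fun_prop
    have ht : Filter.Tendsto (fun ε : ℝ => dot3 p Q + ε * dot3 p (Q - y)) (nhds 0)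
        (nhds (dot3 p Q)) := by
      have := hc.tendsto 0; simpa using this
    have hev : ∀ᶠ ε in nhds (0 : ℝ), dot3 p Q + ε * dot3 p (Q - y) < 1 :=
      ht.eventually_lt_const hp
    have hev' := hev.filter_mono (nhdsWithin_le_nhds (s := Set.Ioi (0 : ℝ)))
    refine hev'.mono fun ε hε => ?_
    rwa [dot3_add_smul]
  have keyu : ∀ᶠ ε in nhdsWithin (0 : ℝ) (Set.Ioi 0), dot3 u (Q + ε • (Q - y)) < 1 := by
    refine Filter.eventually_of_mem self_mem_nhdsWithin fun ε (hε : ε ∈ Set.Ioi (0 : ℝ)) => ?_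
    rw [dot3_add_smul, dot3_sub, hQu]
    have : dot3 u Q - dot3 u y < 0 := by rw [hQu]; linarith
    nlinarith [Set.mem_Ioi.mp hε]
  have hpos : ∀ᶠ ε in nhdsWithin (0 : ℝ) (Set.Ioi 0), (0 : ℝ) < ε :=
    Filter.eventually_of_mem self_mem_nhdsWithin fun ε hε => hε
  obtain ⟨ε, hh⟩ := (((key v hQv).and (key w hQw)).and (keyu.and hpos)).exists
  obtain ⟨⟨hεv, hεw⟩, hεu, hεpos⟩ := hh
  set xε := Q + ε • (Q - y) with hxε
  have hxint : xε ∈ interior B' := hU _ hεu hεv hεw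
  have hseg : Q ∈ openSegment ℝ xε y := by
    refine ⟨1 / (1 + ε), ε / (1 + ε), by positivity, by positivity, by field_simp, ?_⟩
    rw [hxε]
    have h1ε : (1 : ℝ) + ε ≠ 0 := by positivity
    apply Prod.ext
    · simp only [Prod.fst_add, Prod.smul_fst, Prod.fst_sub, smul_eq_mul]
      field_simp; ring
    · apply Prod.ext
      · simp only [Prod.snd_add, Prod.fst_add, Prod.smul_snd, Prod.smul_fst, Prod.snd_sub,
          Prod.fst_sub, smul_eq_mul]
        field_simp; ring
      · simp only [Prod.snd_add, Prod.smul_snd, Prod.snd_sub, smul_eq_mul]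
        field_simp; ring
  have hQint : Q ∈ interior B' :=
    hconv.openSegment_interior_closure_subset_interior hxint (subset_closure hyB) hseg
  have : Q ∈ interior B' ∩ SZ3 S := ⟨hQint, hQS⟩
  rw [hfree] at this
  exact this


set_option maxHeartbeats 4000000 in
theorem stmt17 (b : ℝ × ℝ) (hb2 : -1 ≤ b.2) (hb21 : b.2 ≤ b.1) (hb1 : b.1 ≤ 0)
    (hbZ : ¬ ∃ z w : ℤ, b = ((z : ℝ), (w : ℝ)))
    (S : Set (ℝ × ℝ)) (hS : S = {x | ∃ z w : ℤ, x = (b.1 + (z : ℝ), b.2 + (w : ℝ))})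
    (g1 g2 g3 : ℝ) (hg1 : 0 < g1) (hg2 : 0 < g2) (hg3 : 0 < g3)
    (hg2' : g2 < 1) (hg3' : g3 < 1)
    (w1 w2 w3 : ℝ × ℝ)
    (hw1 : w1 = (1 / ((b.1 + 1) + g1 * (b.2 + 1)), g1 / ((b.1 + 1) + g1 * (b.2 + 1))))
    (hw2 : w2 = (-1 / (-b.1 + g2 * (b.2 + 1)), g2 / (-b.1 + g2 * (b.2 + 1))))
    (hw3 : w3 = (g3 / (g3 * b.1 - b.2), -1 / (g3 * b.1 - b.2)))
    (T : Set (ℝ × ℝ))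
    (hT : T = {x | dot2 w1 x ≤ 1 ∧ dot2 w2 x ≤ 1 ∧ dot2 w3 x ≤ 1}) :
    ∃ (P : Set (ℝ × ℝ × ℝ)) (u1 u2 u3 apex : ℝ × ℝ × ℝ),
      P = {x | dot3 u1 x ≤ 1 ∧ dot3 u2 x ≤ 1 ∧ dot3 u3 x ≤ 1} ∧
      LinearIndependent ℝ ![u1, u2, u3] ∧
      dot3 u1 apex = 1 ∧ dot3 u2 apex = 1 ∧ dot3 u3 apex = 1 ∧
      0 < apex.2.2 ∧
      P ∩ {x : ℝ × ℝ × ℝ | x.2.2 = 0} = (fun v : ℝ × ℝ => ((v.1, v.2, (0 : ℝ)) : ℝ × ℝ × ℝ)) '' T ∧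
      IsMaxFreeNbhd (SZ3 S) P ∧
      (∀ u ∈ ({u1, u2, u3} : Set (ℝ × ℝ × ℝ)),
        ∃ p ∈ intrinsicInterior ℝ (P ∩ {x : ℝ × ℝ × ℝ | dot3 u x = 1}),
          p ∈ SZ3 S ∧ ∃ k : ℕ, 1 ≤ k ∧ p.2.2 = (k : ℝ)) := by
  have hb1' : (-1 : ℝ) ≤ b.1 := le_trans hb2 hb21
  have hD1 : (0 : ℝ) < ((b.1 + 1) + g1 * (b.2 + 1)) := by
    rcases eq_or_lt_of_le hb1' with h | h
    · exfalso
      apply hbZ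
      refine ⟨-1, -1, ?_⟩
      have hb2e : b.2 = -1 := le_antisymm (by linarith) hb2
      rw [Prod.ext_iff]
      push_cast
      constructor <;> linarith
    · nlinarith [mul_nonneg hg1.le (by linarith : (0:ℝ) ≤ b.2 + 1)]
  have hD2 : (0 : ℝ) < (-b.1 + g2 * (b.2 + 1)) := by
    rcases eq_or_lt_of_le hb1 with h | h
    · rcases eq_or_lt_of_le hb2 with h2 | h2
      · exfalso
        apply hbZ
        refine ⟨0, -1, ?_⟩
        rw [Prod.ext_iff]
        push_cast
        constructor <;> linarith
      · nlinarith [mul_pos hg2 (by linarith : (0:ℝ) < b.2 + 1)]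
    · nlinarith [mul_nonneg hg2.le (by linarith : (0:ℝ) ≤ b.2 + 1)]
  have hD3 : (0 : ℝ) < (g3 * b.1 - b.2) := by
    rcases eq_or_lt_of_le hb1 with h | h
    · rcases eq_or_lt_of_le hb21 with h2 | h2
      · exfalso
        apply hbZ
        refine ⟨0, 0, ?_⟩
        rw [Prod.ext_iff]
        push_cast
        constructor <;> linarith
      · nlinarith
    · nlinarith
  have h1g3 : (0 : ℝ) < 1 - g3 := by linarith
  set m : ℕ := ⌈g3 / (1 - g3)⌉₊ with hmdef
  have hm1 : 1 ≤ m := by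
    rw [hmdef]
    exact Nat.one_le_ceil_iff.mpr (div_pos hg3 h1g3)
  have hM1 : (1 : ℝ) ≤ ((m : ℝ)) := by exact_mod_cast hm1
  have hMa : g3 / (1 - g3) ≤ ((m : ℝ)) := by rw [hmdef]; exact Nat.le_ceil _
  have hMg : g3 * (((m : ℝ)) + 1) ≤ ((m : ℝ)) := by
    have h := (div_le_iff₀ h1g3).mp hMa
    nlinarith
  have hMb : ((m : ℝ)) < 1 + ((m : ℝ)) * g3 := by
    have h := Nat.ceil_lt_add_one (le_of_lt (div_pos hg3 h1g3))
    rw [← hmdef] at h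
    have h2 : (((m : ℝ)) - 1) * (1 - g3) < g3 := by
      have h3 : ((m : ℝ)) - 1 < g3 / (1 - g3) := by linarith
      exact (lt_div_iff₀ h1g3).mp h3
    nlinarith
  have hg23 : (0 : ℝ) < 1 - g2 * g3 := by nlinarith
  have hD0 : (0 : ℝ) < ((((m : ℝ)) + 1 + ((m : ℝ)) * g1) * (1 - g2 * g3) - (((m : ℝ)) + 1) * (1 + g1 * g3) * (1 - g2)) := by
    nlinarith [mul_le_mul_of_nonneg_right hMg (by linarith : (0:ℝ) ≤ 1 - g2),
      mul_pos hg2 (by linarith : (0:ℝ) < 1 - g3),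
      mul_pos hg1 (mul_pos hg2 (by linarith : (0:ℝ) < 1 - g3)), hM1]
  have hc1 : (0 : ℝ) < (((m : ℝ)) + 1) * ((b.1 + 1) + g1 * (b.2 + 1)) := by
    have h0 : (0:ℝ) < ((m : ℝ)) + 1 := by linarith
    exact mul_pos h0 hD1
  have eA1 : ∀ p q r : ℝ, ((((m : ℝ)) + 1) * ((b.1 + 1) + g1 * (b.2 + 1))) * (1 - dot3 ((1 / ((b.1 + 1) + g1 * (b.2 + 1)), g1 / ((b.1 + 1) + g1 * (b.2 + 1)), ((((m : ℝ)) + 1 + ((m : ℝ)) * g1) / ((((m : ℝ)) + 1) * ((b.1 + 1) + g1 * (b.2 + 1))))) : ℝ × ℝ × ℝ) ((p, q, r) : ℝ × ℝ × ℝ)) = ((((m : ℝ)) + 1) * (1 + g1) - (((m : ℝ)) + 1) * (((p) - b.1) + g1 * ((q) - b.2)) - ((((m : ℝ)) + 1) + ((m : ℝ)) * g1) * (r)) := by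
    intro p q r
    simp only [dot3]
    field_simp
    ring
  have eA2 : ∀ p q r : ℝ, (-b.1 + g2 * (b.2 + 1)) * (1 - dot3 ((-1 / (-b.1 + g2 * (b.2 + 1)), g2 / (-b.1 + g2 * (b.2 + 1)), -(1 - g2) / (-b.1 + g2 * (b.2 + 1))) : ℝ × ℝ × ℝ) ((p, q, r) : ℝ × ℝ × ℝ)) = (g2 + (1 - g2) * (r) + ((p) - b.1) - g2 * ((q) - b.2)) := by
    intro p q r
    simp only [dot3]
    field_simp
    ring
  have eA3 : ∀ p q r : ℝ, (g3 * b.1 - b.2) * (1 - dot3 ((g3 / (g3 * b.1 - b.2), -1 / (g3 * b.1 - b.2), (0:ℝ)) : ℝ × ℝ × ℝ) ((p, q, r) : ℝ × ℝ × ℝ)) = ((((q) - b.2)) - g3 * ((p) - b.1)) := by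
    intro p q r
    simp only [dot3]
    field_simp
    ring
  have conv1eq : ∀ p q r : ℝ, ((((m : ℝ)) + 1) * (1 + g1) - (((m : ℝ)) + 1) * (((p) - b.1) + g1 * ((q) - b.2)) - ((((m : ℝ)) + 1) + ((m : ℝ)) * g1) * (r)) = 0 → dot3 ((1 / ((b.1 + 1) + g1 * (b.2 + 1)), g1 / ((b.1 + 1) + g1 * (b.2 + 1)), ((((m : ℝ)) + 1 + ((m : ℝ)) * g1) / ((((m : ℝ)) + 1) * ((b.1 + 1) + g1 * (b.2 + 1))))) : ℝ × ℝ × ℝ) ((p, q, r) : ℝ × ℝ × ℝ) = 1 := by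
    intro p q r h
    have h2 := eA1 p q r
    rw [h] at h2
    have h3 := (mul_eq_zero.mp h2).resolve_left hc1.ne'
    linarith
  have conv2eq : ∀ p q r : ℝ, (g2 + (1 - g2) * (r) + ((p) - b.1) - g2 * ((q) - b.2)) = 0 → dot3 ((-1 / (-b.1 + g2 * (b.2 + 1)), g2 / (-b.1 + g2 * (b.2 + 1)), -(1 - g2) / (-b.1 + g2 * (b.2 + 1))) : ℝ × ℝ × ℝ) ((p, q, r) : ℝ × ℝ × ℝ) = 1 := by
    intro p q r h
    have h2 := eA2 p q r
    rw [h] at h2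
    have h3 := (mul_eq_zero.mp h2).resolve_left hD2.ne'
    linarith
  have conv3eq : ∀ p q r : ℝ, ((((q) - b.2)) - g3 * ((p) - b.1)) = 0 → dot3 ((g3 / (g3 * b.1 - b.2), -1 / (g3 * b.1 - b.2), (0:ℝ)) : ℝ × ℝ × ℝ) ((p, q, r) : ℝ × ℝ × ℝ) = 1 := by
    intro p q r h
    have h2 := eA3 p q r
    rw [h] at h2
    have h3 := (mul_eq_zero.mp h2).resolve_left hD3.ne'
    linarith
  have conv1lt : ∀ p q r : ℝ, 0 < ((((m : ℝ)) + 1) * (1 + g1) - (((m : ℝ)) + 1) * (((p) - b.1) + g1 * ((q) - b.2)) - ((((m : ℝ)) + 1) + ((m : ℝ)) * g1) * (r)) → dot3 ((1 / ((b.1 + 1) + g1 * (b.2 + 1)), g1 / ((b.1 + 1) + g1 * (b.2 + 1)), ((((m : ℝ)) + 1 + ((m : ℝ)) * g1) / ((((m : ℝ)) + 1) * ((b.1 + 1) + g1 * (b.2 + 1))))) : ℝ × ℝ × ℝ) ((p, q, r) : ℝ × ℝ × ℝ) < 1 := by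
    intro p q r h
    have h2 := eA1 p q r
    rw [← h2] at h
    have h3 := (mul_pos_iff_of_pos_left hc1).mp h
    linarith
  have conv2lt : ∀ p q r : ℝ, 0 < (g2 + (1 - g2) * (r) + ((p) - b.1) - g2 * ((q) - b.2)) → dot3 ((-1 / (-b.1 + g2 * (b.2 + 1)), g2 / (-b.1 + g2 * (b.2 + 1)), -(1 - g2) / (-b.1 + g2 * (b.2 + 1))) : ℝ × ℝ × ℝ) ((p, q, r) : ℝ × ℝ × ℝ) < 1 := by
    intro p q r h
    have h2 := eA2 p q r
    rw [← h2] at h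
    have h3 := (mul_pos_iff_of_pos_left hD2).mp h
    linarith
  have conv3lt : ∀ p q r : ℝ, 0 < ((((q) - b.2)) - g3 * ((p) - b.1)) → dot3 ((g3 / (g3 * b.1 - b.2), -1 / (g3 * b.1 - b.2), (0:ℝ)) : ℝ × ℝ × ℝ) ((p, q, r) : ℝ × ℝ × ℝ) < 1 := by
    intro p q r h
    have h2 := eA3 p q r
    rw [← h2] at h
    have h3 := (mul_pos_iff_of_pos_left hD3).mp h
    linarith
  have conv1rev : ∀ p q r : ℝ, dot3 ((1 / ((b.1 + 1) + g1 * (b.2 + 1)), g1 / ((b.1 + 1) + g1 * (b.2 + 1)), ((((m : ℝ)) + 1 + ((m : ℝ)) * g1) / ((((m : ℝ)) + 1) * ((b.1 + 1) + g1 * (b.2 + 1))))) : ℝ × ℝ × ℝ) ((p, q, r) : ℝ × ℝ × ℝ) < 1 → 0 < ((((m : ℝ)) + 1) * (1 + g1) - (((m : ℝ)) + 1) * (((p) - b.1) + g1 * ((q) - b.2)) - ((((m : ℝ)) + 1) + ((m : ℝ)) * g1) * (r)) := by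
    intro p q r h
    have h2 := eA1 p q r
    have h3 : (0:ℝ) < ((((m : ℝ)) + 1) * ((b.1 + 1) + g1 * (b.2 + 1))) * (1 - dot3 ((1 / ((b.1 + 1) + g1 * (b.2 + 1)), g1 / ((b.1 + 1) + g1 * (b.2 + 1)), ((((m : ℝ)) + 1 + ((m : ℝ)) * g1) / ((((m : ℝ)) + 1) * ((b.1 + 1) + g1 * (b.2 + 1))))) : ℝ × ℝ × ℝ) ((p, q, r) : ℝ × ℝ × ℝ)) :=
      (mul_pos_iff_of_pos_left hc1).mpr (by linarith)
    rw [h2] at h3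
    exact h3
  have conv2rev : ∀ p q r : ℝ, dot3 ((-1 / (-b.1 + g2 * (b.2 + 1)), g2 / (-b.1 + g2 * (b.2 + 1)), -(1 - g2) / (-b.1 + g2 * (b.2 + 1))) : ℝ × ℝ × ℝ) ((p, q, r) : ℝ × ℝ × ℝ) < 1 → 0 < (g2 + (1 - g2) * (r) + ((p) - b.1) - g2 * ((q) - b.2)) := by
    intro p q r h
    have h2 := eA2 p q r
    have h3 : (0:ℝ) < (-b.1 + g2 * (b.2 + 1)) * (1 - dot3 ((-1 / (-b.1 + g2 * (b.2 + 1)), g2 / (-b.1 + g2 * (b.2 + 1)), -(1 - g2) / (-b.1 + g2 * (b.2 + 1))) : ℝ × ℝ × ℝ) ((p, q, r) : ℝ × ℝ × ℝ)) :=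
      (mul_pos_iff_of_pos_left hD2).mpr (by linarith)
    rw [h2] at h3
    exact h3
  have conv3rev : ∀ p q r : ℝ, dot3 ((g3 / (g3 * b.1 - b.2), -1 / (g3 * b.1 - b.2), (0:ℝ)) : ℝ × ℝ × ℝ) ((p, q, r) : ℝ × ℝ × ℝ) < 1 → 0 < ((((q) - b.2)) - g3 * ((p) - b.1)) := by
    intro p q r h
    have h2 := eA3 p q r
    have h3 : (0:ℝ) < (g3 * b.1 - b.2) * (1 - dot3 ((g3 / (g3 * b.1 - b.2), -1 / (g3 * b.1 - b.2), (0:ℝ)) : ℝ × ℝ × ℝ) ((p, q, r) : ℝ × ℝ × ℝ)) :=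
      (mul_pos_iff_of_pos_left hD3).mpr (by linarith)
    rw [h2] at h3
    exact h3
  -- facet point facts
  have hQ11 : dot3 ((1 / ((b.1 + 1) + g1 * (b.2 + 1)), g1 / ((b.1 + 1) + g1 * (b.2 + 1)), ((((m : ℝ)) + 1 + ((m : ℝ)) * g1) / ((((m : ℝ)) + 1) * ((b.1 + 1) + g1 * (b.2 + 1))))) : ℝ × ℝ × ℝ) ((b.1 - ((m : ℝ)), b.2 + 1 - ((m : ℝ)), ((m : ℝ)) + 1) : ℝ × ℝ × ℝ) = 1 := conv1eq _ _ _ (by ring)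
  have hQ12 : dot3 ((-1 / (-b.1 + g2 * (b.2 + 1)), g2 / (-b.1 + g2 * (b.2 + 1)), -(1 - g2) / (-b.1 + g2 * (b.2 + 1))) : ℝ × ℝ × ℝ) ((b.1 - ((m : ℝ)), b.2 + 1 - ((m : ℝ)), ((m : ℝ)) + 1) : ℝ × ℝ × ℝ) < 1 := conv2lt _ _ _ (by nlinarith)
  have hQ13 : dot3 ((g3 / (g3 * b.1 - b.2), -1 / (g3 * b.1 - b.2), (0:ℝ)) : ℝ × ℝ × ℝ) ((b.1 - ((m : ℝ)), b.2 + 1 - ((m : ℝ)), ((m : ℝ)) + 1) : ℝ × ℝ × ℝ) < 1 := conv3lt _ _ _ (by nlinarith)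
  have hQ22 : dot3 ((-1 / (-b.1 + g2 * (b.2 + 1)), g2 / (-b.1 + g2 * (b.2 + 1)), -(1 - g2) / (-b.1 + g2 * (b.2 + 1))) : ℝ × ℝ × ℝ) ((b.1 - 1, b.2, (1:ℝ)) : ℝ × ℝ × ℝ) = 1 := conv2eq _ _ _ (by ring)
  have hQ21 : dot3 ((1 / ((b.1 + 1) + g1 * (b.2 + 1)), g1 / ((b.1 + 1) + g1 * (b.2 + 1)), ((((m : ℝ)) + 1 + ((m : ℝ)) * g1) / ((((m : ℝ)) + 1) * ((b.1 + 1) + g1 * (b.2 + 1))))) : ℝ × ℝ × ℝ) ((b.1 - 1, b.2, (1:ℝ)) : ℝ × ℝ × ℝ) < 1 := conv1lt _ _ _ (by nlinarith)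
  have hQ23 : dot3 ((g3 / (g3 * b.1 - b.2), -1 / (g3 * b.1 - b.2), (0:ℝ)) : ℝ × ℝ × ℝ) ((b.1 - 1, b.2, (1:ℝ)) : ℝ × ℝ × ℝ) < 1 := conv3lt _ _ _ (by nlinarith)
  have hQ33 : dot3 ((g3 / (g3 * b.1 - b.2), -1 / (g3 * b.1 - b.2), (0:ℝ)) : ℝ × ℝ × ℝ) ((b.1, b.2, (1:ℝ)) : ℝ × ℝ × ℝ) = 1 := conv3eq _ _ _ (by ring)
  have hQ31 : dot3 ((1 / ((b.1 + 1) + g1 * (b.2 + 1)), g1 / ((b.1 + 1) + g1 * (b.2 + 1)), ((((m : ℝ)) + 1 + ((m : ℝ)) * g1) / ((((m : ℝ)) + 1) * ((b.1 + 1) + g1 * (b.2 + 1))))) : ℝ × ℝ × ℝ) ((b.1, b.2, (1:ℝ)) : ℝ × ℝ × ℝ) < 1 := conv1lt _ _ _ (by nlinarith)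
  have hQ32 : dot3 ((-1 / (-b.1 + g2 * (b.2 + 1)), g2 / (-b.1 + g2 * (b.2 + 1)), -(1 - g2) / (-b.1 + g2 * (b.2 + 1))) : ℝ × ℝ × ℝ) ((b.1, b.2, (1:ℝ)) : ℝ × ℝ × ℝ) < 1 := conv2lt _ _ _ (by nlinarith)
  have hQ1S : ((b.1 - ((m : ℝ)), b.2 + 1 - ((m : ℝ)), ((m : ℝ)) + 1) : ℝ × ℝ × ℝ) ∈ SZ3 S := by
    constructor
    · rw [hS]
      exact ⟨-(m : ℤ), 1 - (m : ℤ), by rw [Prod.ext_iff]; constructor <;> (push_cast; ring)⟩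
    · exact ⟨m + 1, by push_cast; ring⟩
  have hQ2S : ((b.1 - 1, b.2, (1:ℝ)) : ℝ × ℝ × ℝ) ∈ SZ3 S := by
    constructor
    · rw [hS]
      exact ⟨-1, 0, by rw [Prod.ext_iff]; constructor <;> (push_cast; ring)⟩
    · exact ⟨1, by norm_num⟩
  have hQ3S : ((b.1, b.2, (1:ℝ)) : ℝ × ℝ × ℝ) ∈ SZ3 S := by
    constructor
    · rw [hS]
      exact ⟨0, 0, by rw [Prod.ext_iff]; constructor <;> (push_cast; ring)⟩
    · exact ⟨1, by norm_num⟩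
  -- the strict set is open and inside P
  have hstrictopen : IsOpen {x : ℝ × ℝ × ℝ | dot3 ((1 / ((b.1 + 1) + g1 * (b.2 + 1)), g1 / ((b.1 + 1) + g1 * (b.2 + 1)), ((((m : ℝ)) + 1 + ((m : ℝ)) * g1) / ((((m : ℝ)) + 1) * ((b.1 + 1) + g1 * (b.2 + 1))))) : ℝ × ℝ × ℝ) x < 1 ∧ dot3 ((-1 / (-b.1 + g2 * (b.2 + 1)), g2 / (-b.1 + g2 * (b.2 + 1)), -(1 - g2) / (-b.1 + g2 * (b.2 + 1))) : ℝ × ℝ × ℝ) x < 1 ∧ dot3 ((g3 / (g3 * b.1 - b.2), -1 / (g3 * b.1 - b.2), (0:ℝ)) : ℝ × ℝ × ℝ) x < 1} := by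
    have c1 := dot3_cont ((1 / ((b.1 + 1) + g1 * (b.2 + 1)), g1 / ((b.1 + 1) + g1 * (b.2 + 1)), ((((m : ℝ)) + 1 + ((m : ℝ)) * g1) / ((((m : ℝ)) + 1) * ((b.1 + 1) + g1 * (b.2 + 1))))) : ℝ × ℝ × ℝ)
    have c2 := dot3_cont ((-1 / (-b.1 + g2 * (b.2 + 1)), g2 / (-b.1 + g2 * (b.2 + 1)), -(1 - g2) / (-b.1 + g2 * (b.2 + 1))) : ℝ × ℝ × ℝ)
    have c3 := dot3_cont ((g3 / (g3 * b.1 - b.2), -1 / (g3 * b.1 - b.2), (0:ℝ)) : ℝ × ℝ × ℝ)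
    exact (isOpen_lt c1 continuous_const).inter
      ((isOpen_lt c2 continuous_const).inter (isOpen_lt c3 continuous_const))
  have hstrictsubP : {x : ℝ × ℝ × ℝ | dot3 ((1 / ((b.1 + 1) + g1 * (b.2 + 1)), g1 / ((b.1 + 1) + g1 * (b.2 + 1)), ((((m : ℝ)) + 1 + ((m : ℝ)) * g1) / ((((m : ℝ)) + 1) * ((b.1 + 1) + g1 * (b.2 + 1))))) : ℝ × ℝ × ℝ) x < 1 ∧ dot3 ((-1 / (-b.1 + g2 * (b.2 + 1)), g2 / (-b.1 + g2 * (b.2 + 1)), -(1 - g2) / (-b.1 + g2 * (b.2 + 1))) : ℝ × ℝ × ℝ) x < 1 ∧ dot3 ((g3 / (g3 * b.1 - b.2), -1 / (g3 * b.1 - b.2), (0:ℝ)) : ℝ × ℝ × ℝ) x < 1} ⊆ {x : ℝ × ℝ × ℝ | dot3 ((1 / ((b.1 + 1) + g1 * (b.2 + 1)), g1 / ((b.1 + 1) + g1 * (b.2 + 1)), ((((m : ℝ)) + 1 + ((m : ℝ)) * g1) / ((((m : ℝ)) + 1) * ((b.1 + 1) + g1 * (b.2 + 1))))) : ℝ ×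 ℝ × ℝ) x ≤ 1 ∧ dot3 ((-1 / (-b.1 + g2 * (b.2 + 1)), g2 / (-b.1 + g2 * (b.2 + 1)), -(1 - g2) / (-b.1 + g2 * (b.2 + 1))) : ℝ × ℝ × ℝ) x ≤ 1 ∧ dot3 ((g3 / (g3 * b.1 - b.2), -1 / (g3 * b.1 - b.2), (0:ℝ)) : ℝ × ℝ × ℝ) x ≤ 1} := fun x hx => ⟨hx.1.le, hx.2.1.le, hx.2.2.le⟩
  have hstrictint : {x : ℝ × ℝ × ℝ | dot3 ((1 / ((b.1 + 1) + g1 * (b.2 + 1)), g1 / ((b.1 + 1) + g1 * (b.2 + 1)), ((((m : ℝ)) + 1 + ((m : ℝ)) * g1) / ((((m : ℝ)) + 1) * ((b.1 + 1) + g1 * (b.2 + 1))))) : ℝ × ℝ × ℝ) x < 1 ∧ dot3 ((-1 / (-b.1 + g2 * (b.2 + 1)), g2 / (-b.1 + g2 * (b.2 + 1)), -(1 - g2) / (-b.1 + g2 * (b.2 + 1))) : ℝ × ℝ × ℝ) x < 1 ∧ dot3 ((g3 / (g3 * b.1 - b.2), -1 / (g3 * b.1 - b.2), (0:ℝ)) :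 ℝ × ℝ × ℝ) x < 1} ⊆ interior {x : ℝ × ℝ × ℝ | dot3 ((1 / ((b.1 + 1) + g1 * (b.2 + 1)), g1 / ((b.1 + 1) + g1 * (b.2 + 1)), ((((m : ℝ)) + 1 + ((m : ℝ)) * g1) / ((((m : ℝ)) + 1) * ((b.1 + 1) + g1 * (b.2 + 1))))) : ℝ × ℝ × ℝ) x ≤ 1 ∧ dot3 ((-1 / (-b.1 + g2 * (b.2 + 1)), g2 / (-b.1 + g2 * (b.2 + 1)), -(1 - g2) / (-b.1 + g2 * (b.2 + 1))) : ℝ × ℝ × ℝ) x ≤ 1 ∧ dot3 ((g3 / (g3 * b.1 - b.2), -1 / (g3 * b.1 - b.2), (0:ℝ)) : ℝ × ℝ × ℝ) x ≤ 1} := interior_maximal hstrictsubP hstrictopen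
  refine ⟨{x : ℝ × ℝ × ℝ | dot3 ((1 / ((b.1 + 1) + g1 * (b.2 + 1)), g1 / ((b.1 + 1) + g1 * (b.2 + 1)), ((((m : ℝ)) + 1 + ((m : ℝ)) * g1) / ((((m : ℝ)) + 1) * ((b.1 + 1) + g1 * (b.2 + 1))))) : ℝ × ℝ × ℝ) x ≤ 1 ∧ dot3 ((-1 / (-b.1 + g2 * (b.2 + 1)), g2 / (-b.1 + g2 * (b.2 + 1)), -(1 - g2) / (-b.1 + g2 * (b.2 + 1))) : ℝ × ℝ × ℝ) x ≤ 1 ∧ dot3 ((g3 / (g3 * b.1 - b.2), -1 / (g3 * b.1 - b.2), (0:ℝ)) : ℝ × ℝ × ℝ) x ≤ 1}, ((1 / ((b.1 + 1) + g1 * (b.2 + 1)), g1 / ((b.1 + 1) + g1 * (b.2 + 1)), ((((m : ℝ)) + 1 + ((m : ℝ)) * g1) / ((((m : ℝ)) + 1) * ((b.1 + 1) + g1 * (b.2 + 1))))) : ℝ × ℝ × ℝ), ((-1 / (-b.1 + g2 * (b.2 + 1)), g2 / (-b.1 + g2 * (b.2 + 1)), -(1 - g2) / (-b.1 + g2 *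 (b.2 + 1))) : ℝ × ℝ × ℝ), ((g3 / (g3 * b.1 - b.2), -1 / (g3 * b.1 - b.2), (0:ℝ)) : ℝ × ℝ × ℝ), ((b.1 + (-(g2 + ((((m : ℝ)) + 1) * (1 + g1 + g2 - g2 * g3) / ((((m : ℝ)) + 1 + ((m : ℝ)) * g1) * (1 - g2 * g3) - (((m : ℝ)) + 1) * (1 + g1 * g3) * (1 - g2))) * (1 - g2)) / (1 - g2 * g3)), b.2 + g3 * (-(g2 + ((((m : ℝ)) + 1) * (1 + g1 + g2 - g2 * g3) / ((((m : ℝ)) + 1 + ((m : ℝ)) * g1) * (1 - g2 * g3) - (((m : ℝ)) + 1) * (1 + g1 * g3) * (1 - g2))) * (1 - g2)) / (1 - g2 * g3)), ((((m : ℝ)) + 1) * (1 + g1 + g2 - g2 * g3) / ((((m : ℝ)) + 1 + ((m : ℝ)) * g1) * (1 - g2 * g3) - (((m : ℝ)) + 1) * (1 + g1 * g3) * (1 - g2)))) : ℝ × ℝ × ℝ), rfl, ?_, ?_, ?_, ?_, ?_, ?_, ?_, ?_⟩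
  · -- linear independence
    apply li3
    apply ne_of_gt
    have hprod : (0 : ℝ) < ((((m : ℝ)) + 1) * ((b.1 + 1) + g1 * (b.2 + 1)) * (-b.1 + g2 * (b.2 + 1)) * (g3 * b.1 - b.2)) := by
      have h0 : (0:ℝ) < ((m : ℝ)) + 1 := by linarith
      exact mul_pos (mul_pos (mul_pos h0 hD1) hD2) hD3
    have hkey : ((1 / ((b.1 + 1) + g1 * (b.2 + 1))) * ((g2 / (-b.1 + g2 * (b.2 + 1))) * (0:ℝ) - (-(1 - g2) / (-b.1 + g2 * (b.2 + 1))) * (-1 / (g3 * b.1 - b.2))) - (g1 / ((b.1 + 1) + g1 * (b.2 + 1))) * ((-1 / (-b.1 + g2 * (b.2 + 1))) * (0:ℝ) - (-(1 - g2) / (-b.1 + g2 * (b.2 + 1))) * (g3 / (g3 * b.1 - b.2))) + ((((m : ℝ)) + 1 + ((m : ℝ)) * g1) / ((((m : ℝ)) + 1) * ((b.1 + 1) + g1 * (b.2 + 1)))) * ((-1 / (-b.1 + g2 * (b.2 + 1))) * (-1 / (g3 * b.1 - b.2)) - (g2 / (-b.1 + g2 * (b.2 + 1))) * (g3 / (g3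 * b.1 - b.2)))) * ((((m : ℝ)) + 1) * ((b.1 + 1) + g1 * (b.2 + 1)) * (-b.1 + g2 * (b.2 + 1)) * (g3 * b.1 - b.2)) = ((((m : ℝ)) + 1 + ((m : ℝ)) * g1) * (1 - g2 * g3) - (((m : ℝ)) + 1) * (1 + g1 * g3) * (1 - g2)) := by
      have hn1 := hD1.ne'
      have hn2 := hD2.ne'
      have hn3 := hD3.ne'
      have hn4 : ((m : ℝ)) + 1 ≠ 0 := by positivity
      generalize ((b.1 + 1) + g1 * (b.2 + 1)) = E1 at hn1 ⊢
      generalize (-b.1 + g2 * (b.2 + 1)) = E2 at hn2 ⊢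
      generalize (g3 * b.1 - b.2) = E3 at hn3 ⊢
      field_simp
      ring
    show (0:ℝ) < (1 / ((b.1 + 1) + g1 * (b.2 + 1))) * ((g2 / (-b.1 + g2 * (b.2 + 1))) * (0:ℝ) - (-(1 - g2) / (-b.1 + g2 * (b.2 + 1))) * (-1 / (g3 * b.1 - b.2))) - (g1 / ((b.1 + 1) + g1 * (b.2 + 1))) * ((-1 / (-b.1 + g2 * (b.2 + 1))) * (0:ℝ) - (-(1 - g2) / (-b.1 + g2 * (b.2 + 1))) * (g3 / (g3 * b.1 - b.2))) + ((((m : ℝ)) + 1 + ((m : ℝ)) * g1) / ((((m : ℝ)) + 1) * ((b.1 + 1) + g1 * (b.2 + 1)))) * ((-1 / (-b.1 + g2 * (b.2 + 1))) * (-1 / (g3 * b.1 - b.2)) - (g2 / (-b.1 + g2 * (b.2 + 1))) * (g3 / (g3 * b.1 - b.2)))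
    have heq : ((1 / ((b.1 + 1) + g1 * (b.2 + 1))) * ((g2 / (-b.1 + g2 * (b.2 + 1))) * (0:ℝ) - (-(1 - g2) / (-b.1 + g2 * (b.2 + 1))) * (-1 / (g3 * b.1 - b.2))) - (g1 / ((b.1 + 1) + g1 * (b.2 + 1))) * ((-1 / (-b.1 + g2 * (b.2 + 1))) * (0:ℝ) - (-(1 - g2) / (-b.1 + g2 * (b.2 + 1))) * (g3 / (g3 * b.1 - b.2))) + ((((m : ℝ)) + 1 + ((m : ℝ)) * g1) / ((((m : ℝ)) + 1) * ((b.1 + 1) + g1 * (b.2 + 1)))) * ((-1 / (-b.1 + g2 * (b.2 + 1))) * (-1 / (g3 * b.1 - b.2)) - (g2 / (-b.1 + g2 * (b.2 + 1))) * (g3 / (g3 * b.1 - b.2)))) = ((((m : ℝ)) + 1 + ((m : ℝ)) * g1) * (1 - g2 * g3) - (((m : ℝ)) + 1) * (1 + g1 * g3) * (1 - g2)) / ((((m : ℝ)) + 1) * ((b.1 + 1) + g1 * (b.2 + 1)) * (-b.1 + g2 * (b.2 + 1)) * (g3 * b.1 - b.2)) := by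
      rw [eq_div_iff hprod.ne']
      exact hkey
    rw [heq]
    exact div_pos hD0 hprod
  · apply conv1eq
    have hne : (1 - g2 * g3) ≠ 0 := hg23.ne'
    have hne0 : ((((m : ℝ)) + 1 + ((m : ℝ)) * g1) * (1 - g2 * g3) - (((m : ℝ)) + 1) * (1 + g1 * g3) * (1 - g2)) ≠ 0 := hD0.ne'
    field_simp
    ring
  · apply conv2eq
    have hne : (1 - g2 * g3) ≠ 0 := hg23.ne'
    have hne0 : ((((m : ℝ)) + 1 + ((m : ℝ)) * g1) * (1 - g2 * g3) - (((m : ℝ)) + 1) * (1 + g1 * g3) * (1 - g2)) ≠ 0 := hD0.ne'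
    field_simp
    ring
  · apply conv3eq
    have hne : (1 - g2 * g3) ≠ 0 := hg23.ne'
    have hne0 : ((((m : ℝ)) + 1 + ((m : ℝ)) * g1) * (1 - g2 * g3) - (((m : ℝ)) + 1) * (1 + g1 * g3) * (1 - g2)) ≠ 0 := hD0.ne'
    field_simp
    ring
  · show (0 : ℝ) < ((((m : ℝ)) + 1) * (1 + g1 + g2 - g2 * g3) / ((((m : ℝ)) + 1 + ((m : ℝ)) * g1) * (1 - g2 * g3) - (((m : ℝ)) + 1) * (1 + g1 * g3) * (1 - g2)))
    apply div_pos
    · nlinarith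
    · exact hD0
  · -- slice at height 0
    have hrel1 : ∀ v : ℝ × ℝ, dot3 ((1 / ((b.1 + 1) + g1 * (b.2 + 1)), g1 / ((b.1 + 1) + g1 * (b.2 + 1)), ((((m : ℝ)) + 1 + ((m : ℝ)) * g1) / ((((m : ℝ)) + 1) * ((b.1 + 1) + g1 * (b.2 + 1))))) : ℝ × ℝ × ℝ) ((v.1, v.2, (0:ℝ)) : ℝ × ℝ × ℝ) = dot2 w1 v := by
      intro v
      rw [hw1]
      simp only [dot2, dot3]
      ring
    have hrel2 : ∀ v : ℝ × ℝ, dot3 ((-1 / (-b.1 + g2 * (b.2 + 1)), g2 / (-b.1 + g2 * (b.2 + 1)), -(1 - g2) / (-b.1 + g2 * (b.2 + 1))) : ℝ × ℝ × ℝ) ((v.1, v.2, (0:ℝ)) : ℝ × ℝ × ℝ) = dot2 w2 v := by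
      intro v
      rw [hw2]
      simp only [dot2, dot3]
      ring
    have hrel3 : ∀ v : ℝ × ℝ, dot3 ((g3 / (g3 * b.1 - b.2), -1 / (g3 * b.1 - b.2), (0:ℝ)) : ℝ × ℝ × ℝ) ((v.1, v.2, (0:ℝ)) : ℝ × ℝ × ℝ) = dot2 w3 v := by
      intro v
      rw [hw3]
      simp only [dot2, dot3]
      ring
    apply Set.eq_of_subset_of_subset
    · rintro x ⟨⟨h1, h2, h3⟩, hz⟩
      have hz' : x.2.2 = 0 := hz
      have hxeta : ((x.1, x.2.1, (0:ℝ)) : ℝ × ℝ × ℝ) = x := by rw [← hz']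
      refine ⟨(x.1, x.2.1), ?_, hxeta⟩
      rw [hT]
      refine ⟨?_, ?_, ?_⟩
      · rw [← hrel1 (x.1, x.2.1)]
        rw [show ((((x.1, x.2.1) : ℝ × ℝ).1, ((x.1, x.2.1) : ℝ × ℝ).2, (0:ℝ)) : ℝ × ℝ × ℝ) = ((x.1, x.2.1, (0:ℝ)) : ℝ × ℝ × ℝ) from rfl, hxeta]
        exact h1
      · rw [← hrel2 (x.1, x.2.1)]
        rw [show ((((x.1, x.2.1) : ℝ × ℝ).1, ((x.1, x.2.1) : ℝ × ℝ).2, (0:ℝ)) : ℝ × ℝ × ℝ) = ((x.1, x.2.1, (0:ℝ)) : ℝ × ℝ × ℝ) from rfl, hxeta]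
        exact h2
      · rw [← hrel3 (x.1, x.2.1)]
        rw [show ((((x.1, x.2.1) : ℝ × ℝ).1, ((x.1, x.2.1) : ℝ × ℝ).2, (0:ℝ)) : ℝ × ℝ × ℝ) = ((x.1, x.2.1, (0:ℝ)) : ℝ × ℝ × ℝ) from rfl, hxeta]
        exact h3
    · rintro x ⟨v, hvT, rfl⟩
      rw [hT] at hvT
      obtain ⟨h1, h2, h3⟩ := hvT
      exact ⟨⟨by rw [hrel1 v]; exact h1, by rw [hrel2 v]; exact h2, by rw [hrel3 v]; exact h3⟩, rfl⟩
  · -- IsMaxFreeNbhd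
    refine ⟨?_, ?_, ?_, ?_⟩
    · -- convex
      exact (convex_dot3_le ((1 / ((b.1 + 1) + g1 * (b.2 + 1)), g1 / ((b.1 + 1) + g1 * (b.2 + 1)), ((((m : ℝ)) + 1 + ((m : ℝ)) * g1) / ((((m : ℝ)) + 1) * ((b.1 + 1) + g1 * (b.2 + 1))))) : ℝ × ℝ × ℝ)).inter ((convex_dot3_le ((-1 / (-b.1 + g2 * (b.2 + 1)), g2 / (-b.1 + g2 * (b.2 + 1)), -(1 - g2) / (-b.1 + g2 * (b.2 + 1))) : ℝ × ℝ × ℝ)).inter (convex_dot3_le ((g3 / (g3 * b.1 - b.2), -1 / (g3 * b.1 - b.2), (0:ℝ)) : ℝ × ℝ × ℝ)))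
    · -- 0 in interior
      apply hstrictint
      have hz1 : dot3 ((1 / ((b.1 + 1) + g1 * (b.2 + 1)), g1 / ((b.1 + 1) + g1 * (b.2 + 1)), ((((m : ℝ)) + 1 + ((m : ℝ)) * g1) / ((((m : ℝ)) + 1) * ((b.1 + 1) + g1 * (b.2 + 1))))) : ℝ × ℝ × ℝ) ((0:ℝ), (0:ℝ), (0:ℝ)) = 0 := by simp [dot3]
      have hz2 : dot3 ((-1 / (-b.1 + g2 * (b.2 + 1)), g2 / (-b.1 + g2 * (b.2 + 1)), -(1 - g2) / (-b.1 + g2 * (b.2 + 1))) : ℝ × ℝ × ℝ) ((0:ℝ), (0:ℝ), (0:ℝ)) = 0 := by simp [dot3]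
      have hz3 : dot3 ((g3 / (g3 * b.1 - b.2), -1 / (g3 * b.1 - b.2), (0:ℝ)) : ℝ × ℝ × ℝ) ((0:ℝ), (0:ℝ), (0:ℝ)) = 0 := by simp [dot3]
      refine ⟨by rw [show ((0:ℝ×ℝ×ℝ)) = (((0:ℝ),(0:ℝ),(0:ℝ)) : ℝ×ℝ×ℝ) from rfl, hz1]; norm_num,
        by rw [show ((0:ℝ×ℝ×ℝ)) = (((0:ℝ),(0:ℝ),(0:ℝ)) : ℝ×ℝ×ℝ) from rfl, hz2]; norm_num,
        by rw [show ((0:ℝ×ℝ×ℝ)) = (((0:ℝ),(0:ℝ),(0:ℝ)) : ℝ×ℝ×ℝ) from rfl, hz3]; norm_num⟩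
    · -- interior P ∩ SZ3 S = ∅
      rw [Set.eq_empty_iff_forall_notMem]
      rintro x ⟨hxint, hxS, k, hk⟩
      rw [hS] at hxS
      obtain ⟨z, wz, hzw⟩ := hxS
      have hx1 : x.1 = b.1 + (z : ℝ) := congrArg Prod.fst hzw
      have hx2 : x.2.1 = b.2 + (wz : ℝ) := congrArg Prod.snd hzw
      have huu1 : 0 < dot3 ((1 / ((b.1 + 1) + g1 * (b.2 + 1)), g1 / ((b.1 + 1) + g1 * (b.2 + 1)), ((((m : ℝ)) + 1 + ((m : ℝ)) * g1) / ((((m : ℝ)) + 1) * ((b.1 + 1) + g1 * (b.2 + 1))))) : ℝ × ℝ × ℝ) ((1 / ((b.1 + 1) + g1 * (b.2 + 1)), g1 / ((b.1 + 1) + g1 * (b.2 + 1)), ((((m : ℝ)) + 1 + ((m : ℝ)) * g1) / ((((m : ℝ)) + 1) * ((b.1 + 1) + g1 * (b.2 + 1))))) : ℝ × ℝ × ℝ) := by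
        have h1d : (0:ℝ) < 1 / ((b.1 + 1) + g1 * (b.2 + 1)) := one_div_pos.mpr hD1
        show (0:ℝ) < 1 / ((b.1 + 1) + g1 * (b.2 + 1)) * (1 / ((b.1 + 1) + g1 * (b.2 + 1))) + g1 / ((b.1 + 1) + g1 * (b.2 + 1)) * (g1 / ((b.1 + 1) + g1 * (b.2 + 1))) + ((((m : ℝ)) + 1 + ((m : ℝ)) * g1) / ((((m : ℝ)) + 1) * ((b.1 + 1) + g1 * (b.2 + 1)))) * ((((m : ℝ)) + 1 + ((m : ℝ)) * g1) / ((((m : ℝ)) + 1) * ((b.1 + 1) + g1 * (b.2 + 1))))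
        nlinarith [mul_pos h1d h1d, mul_self_nonneg (g1 / ((b.1 + 1) + g1 * (b.2 + 1))), mul_self_nonneg ((((m : ℝ)) + 1 + ((m : ℝ)) * g1) / ((((m : ℝ)) + 1) * ((b.1 + 1) + g1 * (b.2 + 1))))]
      have huu2 : 0 < dot3 ((-1 / (-b.1 + g2 * (b.2 + 1)), g2 / (-b.1 + g2 * (b.2 + 1)), -(1 - g2) / (-b.1 + g2 * (b.2 + 1))) : ℝ × ℝ × ℝ) ((-1 / (-b.1 + g2 * (b.2 + 1)), g2 / (-b.1 + g2 * (b.2 + 1)), -(1 - g2) / (-b.1 + g2 * (b.2 + 1))) : ℝ × ℝ × ℝ) := by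
        have hneg : -1 / (-b.1 + g2 * (b.2 + 1)) < 0 := div_neg_of_neg_of_pos (by norm_num) hD2
        have h1d : (0:ℝ) < -1 / (-b.1 + g2 * (b.2 + 1)) * (-1 / (-b.1 + g2 * (b.2 + 1))) := mul_pos_of_neg_of_neg hneg hneg
        show (0:ℝ) < -1 / (-b.1 + g2 * (b.2 + 1)) * (-1 / (-b.1 + g2 * (b.2 + 1))) + g2 / (-b.1 + g2 * (b.2 + 1)) * (g2 / (-b.1 + g2 * (b.2 + 1))) + -(1 - g2) / (-b.1 + g2 * (b.2 + 1)) * (-(1 - g2) / (-b.1 + g2 * (b.2 + 1)))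
        nlinarith [h1d, mul_self_nonneg (g2 / (-b.1 + g2 * (b.2 + 1))), mul_self_nonneg (-(1 - g2) / (-b.1 + g2 * (b.2 + 1)))]
      have huu3 : 0 < dot3 ((g3 / (g3 * b.1 - b.2), -1 / (g3 * b.1 - b.2), (0:ℝ)) : ℝ × ℝ × ℝ) ((g3 / (g3 * b.1 - b.2), -1 / (g3 * b.1 - b.2), (0:ℝ)) : ℝ × ℝ × ℝ) := by
        have hneg : -1 / (g3 * b.1 - b.2) < 0 := div_neg_of_neg_of_pos (by norm_num) hD3
        have h1d : (0:ℝ) < -1 / (g3 * b.1 - b.2) * (-1 / (g3 * b.1 - b.2)) := mul_pos_of_neg_of_neg hneg hneg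
        show (0:ℝ) < g3 / (g3 * b.1 - b.2) * (g3 / (g3 * b.1 - b.2)) + -1 / (g3 * b.1 - b.2) * (-1 / (g3 * b.1 - b.2)) + (0:ℝ) * (0:ℝ)
        nlinarith [h1d, mul_self_nonneg (g3 / (g3 * b.1 - b.2))]
      have hs1 : dot3 ((1 / ((b.1 + 1) + g1 * (b.2 + 1)), g1 / ((b.1 + 1) + g1 * (b.2 + 1)), ((((m : ℝ)) + 1 + ((m : ℝ)) * g1) / ((((m : ℝ)) + 1) * ((b.1 + 1) + g1 * (b.2 + 1))))) : ℝ × ℝ × ℝ) x < 1 := interior_lt _ huu1 (fun y hy => hy.1) hxint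
      have hs2 : dot3 ((-1 / (-b.1 + g2 * (b.2 + 1)), g2 / (-b.1 + g2 * (b.2 + 1)), -(1 - g2) / (-b.1 + g2 * (b.2 + 1))) : ℝ × ℝ × ℝ) x < 1 := interior_lt _ huu2 (fun y hy => hy.2.1) hxint
      have hs3 : dot3 ((g3 / (g3 * b.1 - b.2), -1 / (g3 * b.1 - b.2), (0:ℝ)) : ℝ × ℝ × ℝ) x < 1 := interior_lt _ huu3 (fun y hy => hy.2.2) hxint
      have ha1 := conv1rev x.1 x.2.1 x.2.2 hs1
      have ha2 := conv2rev x.1 x.2.1 x.2.2 hs2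
      have ha3 := conv3rev x.1 x.2.1 x.2.2 hs3
      rw [hx1, hx2] at ha1 ha2 ha3
      rw [hk] at ha1 ha2
      exact free_core g1 g2 g3 m z wz k hg1 hg2 hg2' hg3 hg3' hm1 hMg
        (by linarith [ha1]) (by linarith [ha2]) (by linarith [ha3])
    · -- maximality
      intro B' hB'c hB'0 hB'free hPB'
      refine Set.Subset.antisymm ?_ hPB'
      intro y hyB'
      by_contra hyP
      have hUsub : ∀ x : ℝ × ℝ × ℝ, dot3 ((1 / ((b.1 + 1) + g1 * (b.2 + 1)), g1 / ((b.1 + 1) + g1 * (b.2 + 1)), ((((m : ℝ)) + 1 + ((m : ℝ)) * g1) / ((((m : ℝ)) + 1) * ((b.1 + 1) + g1 * (b.2 + 1))))) : ℝ × ℝ × ℝ) x < 1 → dot3 ((-1 / (-b.1 + g2 * (b.2 + 1)), g2 / (-b.1 + g2 * (b.2 + 1)), -(1 - g2) / (-b.1 + g2 * (b.2 + 1))) : ℝ × ℝ × ℝ) x < 1 → dot3 ((g3 / (g3 * b.1 - b.2), -1 / (g3 * b.1 - b.2), (0:ℝ)) : ℝ × ℝ × ℝ) x < 1 →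
          x ∈ interior B' := fun x h1 h2 h3 => interior_mono hPB' (hstrictint ⟨h1, h2, h3⟩)
      simp only [Set.mem_setOf_eq, not_and_or, not_le] at hyP
      rcases hyP with h | h | h
      · exact violate_free S ((1 / ((b.1 + 1) + g1 * (b.2 + 1)), g1 / ((b.1 + 1) + g1 * (b.2 + 1)), ((((m : ℝ)) + 1 + ((m : ℝ)) * g1) / ((((m : ℝ)) + 1) * ((b.1 + 1) + g1 * (b.2 + 1))))) : ℝ × ℝ × ℝ) ((-1 / (-b.1 + g2 * (b.2 + 1)), g2 / (-b.1 + g2 * (b.2 + 1)), -(1 - g2) / (-b.1 + g2 * (b.2 + 1))) : ℝ × ℝ × ℝ) ((g3 / (g3 * b.1 - b.2), -1 / (g3 * b.1 - b.2), (0:ℝ)) : ℝ × ℝ × ℝ) ((b.1 - ((m : ℝ)), b.2 + 1 - ((m : ℝ)), ((m : ℝ)) + 1) : ℝ × ℝ × ℝ) y B' hB'c hB'free hUsub hyB' h hQ11 hQ12 hQ13 hQ1S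
      · exact violate_free S ((-1 / (-b.1 + g2 * (b.2 + 1)), g2 / (-b.1 + g2 * (b.2 + 1)), -(1 - g2) / (-b.1 + g2 * (b.2 + 1))) : ℝ × ℝ × ℝ) ((1 / ((b.1 + 1) + g1 * (b.2 + 1)), g1 / ((b.1 + 1) + g1 * (b.2 + 1)), ((((m : ℝ)) + 1 + ((m : ℝ)) * g1) / ((((m : ℝ)) + 1) * ((b.1 + 1) + g1 * (b.2 + 1))))) : ℝ × ℝ × ℝ) ((g3 / (g3 * b.1 - b.2), -1 / (g3 * b.1 - b.2), (0:ℝ)) : ℝ × ℝ × ℝ) ((b.1 - 1, b.2, (1:ℝ)) : ℝ × ℝ × ℝ) y B' hB'c hB'free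
          (fun x h1 h2 h3 => hUsub x h2 h1 h3) hyB' h hQ22 hQ21 hQ23 hQ2S
      · exact violate_free S ((g3 / (g3 * b.1 - b.2), -1 / (g3 * b.1 - b.2), (0:ℝ)) : ℝ × ℝ × ℝ) ((1 / ((b.1 + 1) + g1 * (b.2 + 1)), g1 / ((b.1 + 1) + g1 * (b.2 + 1)), ((((m : ℝ)) + 1 + ((m : ℝ)) * g1) / ((((m : ℝ)) + 1) * ((b.1 + 1) + g1 * (b.2 + 1))))) : ℝ × ℝ × ℝ) ((-1 / (-b.1 + g2 * (b.2 + 1)), g2 / (-b.1 + g2 * (b.2 + 1)), -(1 - g2) / (-b.1 + g2 * (b.2 + 1))) : ℝ × ℝ × ℝ) ((b.1, b.2, (1:ℝ)) : ℝ × ℝ × ℝ) y B' hB'c hB'free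
          (fun x h1 h2 h3 => hUsub x h2 h3 h1) hyB' h hQ33 hQ31 hQ32 hQ3S
  · -- facet points
    intro u hu
    simp only [Set.mem_insert_iff, Set.mem_singleton_iff] at hu
    rcases hu with rfl | rfl | rfl
    · refine ⟨((b.1 - ((m : ℝ)), b.2 + 1 - ((m : ℝ)), ((m : ℝ)) + 1) : ℝ × ℝ × ℝ), ?_, hQ1S, ⟨m + 1, by omega, by push_cast; ring⟩⟩
      exact facet_intrinsic _ ((-1 / (-b.1 + g2 * (b.2 + 1)), g2 / (-b.1 + g2 * (b.2 + 1)), -(1 - g2) / (-b.1 + g2 * (b.2 + 1))) : ℝ × ℝ × ℝ) ((g3 / (g3 * b.1 - b.2), -1 / (g3 * b.1 - b.2), (0:ℝ)) : ℝ × ℝ × ℝ) ((b.1 - ((m : ℝ)), b.2 + 1 - ((m : ℝ)), ((m : ℝ)) + 1) : ℝ × ℝ × ℝ) {x : ℝ × ℝ × ℝ | dot3 ((1 / ((b.1 + 1) + g1 * (b.2 + 1)), g1 / ((b.1 + 1) + g1 * (b.2 + 1)), ((((m : ℝ)) + 1 + ((m : ℝ)) * g1) / ((((m : ℝ)) + 1)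 * ((b.1 + 1) + g1 * (b.2 + 1))))) : ℝ × ℝ × ℝ) x ≤ 1 ∧ dot3 ((-1 / (-b.1 + g2 * (b.2 + 1)), g2 / (-b.1 + g2 * (b.2 + 1)), -(1 - g2) / (-b.1 + g2 * (b.2 + 1))) : ℝ × ℝ × ℝ) x ≤ 1 ∧ dot3 ((g3 / (g3 * b.1 - b.2), -1 / (g3 * b.1 - b.2), (0:ℝ)) : ℝ × ℝ × ℝ) x ≤ 1} (fun x => Iff.rfl) hQ11 hQ12 hQ13
    · refine ⟨((b.1 - 1, b.2, (1:ℝ)) : ℝ × ℝ × ℝ), ?_, hQ2S, ⟨1, le_refl 1, by norm_num⟩⟩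
      refine facet_intrinsic _ ((1 / ((b.1 + 1) + g1 * (b.2 + 1)), g1 / ((b.1 + 1) + g1 * (b.2 + 1)), ((((m : ℝ)) + 1 + ((m : ℝ)) * g1) / ((((m : ℝ)) + 1) * ((b.1 + 1) + g1 * (b.2 + 1))))) : ℝ × ℝ × ℝ) ((g3 / (g3 * b.1 - b.2), -1 / (g3 * b.1 - b.2), (0:ℝ)) : ℝ × ℝ × ℝ) ((b.1 - 1, b.2, (1:ℝ)) : ℝ × ℝ × ℝ) {x : ℝ × ℝ × ℝ | dot3 ((1 / ((b.1 + 1) + g1 * (b.2 + 1)), g1 / ((b.1 + 1) + g1 * (b.2 + 1)), ((((m : ℝ)) + 1 + ((m : ℝ)) * g1) / ((((m : ℝ)) + 1) * ((b.1 + 1) + g1 * (b.2 + 1))))) : ℝ × ℝ × ℝ) x ≤ 1 ∧ dot3 ((-1 / (-b.1 + g2 * (b.2 + 1)), g2 / (-b.1 + g2 * (b.2 + 1)), -(1 - g2) / (-b.1 + g2 * (b.2 + 1))) : ℝ × ℝ × ℝ) x ≤ 1 ∧ dot3 ((g3 / (g3 * b.1 - b.2), -1 / (g3 * b.1 - b.2),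 (0:ℝ)) : ℝ × ℝ × ℝ) x ≤ 1} (fun x => ?_) hQ22 hQ21 hQ23
      constructor
      · rintro ⟨a, c, d⟩; exact ⟨c, a, d⟩
      · rintro ⟨a, c, d⟩; exact ⟨c, a, d⟩
    · refine ⟨((b.1, b.2, (1:ℝ)) : ℝ × ℝ × ℝ), ?_, hQ3S, ⟨1, le_refl 1, by norm_num⟩⟩
      refine facet_intrinsic _ ((1 / ((b.1 + 1) + g1 * (b.2 + 1)), g1 / ((b.1 + 1) + g1 * (b.2 + 1)), ((((m : ℝ)) + 1 + ((m : ℝ)) * g1) / ((((m : ℝ)) + 1) * ((b.1 + 1) + g1 * (b.2 + 1))))) : ℝ × ℝ × ℝ) ((-1 / (-b.1 + g2 * (b.2 + 1)), g2 / (-b.1 + g2 * (b.2 + 1)), -(1 - g2) / (-b.1 + g2 * (b.2 + 1))) : ℝ × ℝ × ℝ) ((b.1, b.2, (1:ℝ)) : ℝ × ℝ × ℝ) {x : ℝ × ℝ × ℝ | dot3 ((1 / ((b.1 + 1) + g1 * (b.2 + 1)), g1 / ((b.1 + 1) + g1 * (b.2 + 1)), ((((m : ℝ)) + 1 + ((m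 : ℝ)) * g1) / ((((m : ℝ)) + 1) * ((b.1 + 1) + g1 * (b.2 + 1))))) : ℝ × ℝ × ℝ) x ≤ 1 ∧ dot3 ((-1 / (-b.1 + g2 * (b.2 + 1)), g2 / (-b.1 + g2 * (b.2 + 1)), -(1 - g2) / (-b.1 + g2 * (b.2 + 1))) : ℝ × ℝ × ℝ) x ≤ 1 ∧ dot3 ((g3 / (g3 * b.1 - b.2), -1 / (g3 * b.1 - b.2), (0:ℝ)) : ℝ × ℝ × ℝ) x ≤ 1} (fun x => ?_) hQ33 hQ31 hQ32
      constructor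
      · rintro ⟨a, c, d⟩; exact ⟨d, a, c⟩
      · rintro ⟨a, c, d⟩; exact ⟨c, d, a⟩

end
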